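/- For any simple game W on n voters, if the polytope P_W is nonempty then it is n-dimensional: the affine span of P_W in ℝ^{n+1} has dimension n (equivalently, P_W has nonempty relative interior of dimension n inside the affine hyperplane {(q,w) ∈ ℝ × ℝ^n : Σ_{i=1}^n w_i = 1}). -/
import Mathlib

noncomputable def sumLin (n : ℕ) : (ℝ × (Fin n → ℝ)) →ₗ[ℝ] ℝ where
  toFun p := ∑ i, p.2 i
  map_add' p q := by simp [Finset.sum_add_distrib]
  map_smul' c p := by simp [Finset.mul_sum]

lemma finrank_ker_sumLin (n : ℕ) (hn : 0 < n) :
    Module.finrank ℝ (LinearMap.ker (sumLin n)) = n := by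
  have hsurj : Function.Surjective (sumLin n) := by
    intro r
    refine ⟨(0, fun _ => r / n), ?_⟩
    have : (n : ℝ) ≠ 0 := Nat.cast_ne_zero.mpr hn.ne'
    simp [sumLin]
    field_simp
  have h1 := LinearMap.finrank_range_add_finrank_ker (sumLin n)
  rw [LinearMap.range_eq_top.mpr hsurj] at h1
  simp [Module.finrank_prod] at h1
  omega

lemma sum_fin_add_one (n : ℕ) : ∑ i : Fin n, ((i : ℝ) + 1) = n * (n + 1) / 2 := by
  induction n with
  | zero => simp
  | succ m ih =>
    rw [Fin.sum_univ_castSucc]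
    simp only [Fin.coe_castSucc, Fin.val_last] at *
    rw [ih]
    push_cast
    ring

lemma strictSet_isOpen (n : ℕ) (W : Set (Finset (Fin n))) :
    IsOpen {p : ℝ × (Fin n → ℝ) | 0 < p.1 ∧ p.1 < 1 ∧ (∀ i, 0 < p.2 i) ∧
      (∀ i j : Fin n, i < j → p.2 i < p.2 j) ∧
      ∀ A : Finset (Fin n), (A ∈ W → p.1 < ∑ i ∈ A, p.2 i) ∧
        (A ∉ W → (∑ i ∈ A, p.2 i) < p.1)} := by
  classical
  have hc1 : Continuous fun p : ℝ × (Fin n → ℝ) => p.1 := continuous_fst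
  have hci : ∀ i : Fin n, Continuous fun p : ℝ × (Fin n → ℝ) => p.2 i :=
    fun i => (continuous_apply i).comp continuous_snd
  have hcA : ∀ A : Finset (Fin n), Continuous fun p : ℝ × (Fin n → ℝ) => ∑ i ∈ A, p.2 i :=
    fun A => continuous_finset_sum _ (fun i _ => hci i)
  have heq : {p : ℝ × (Fin n → ℝ) | 0 < p.1 ∧ p.1 < 1 ∧ (∀ i, 0 < p.2 i) ∧
      (∀ i j : Fin n, i < j → p.2 i < p.2 j) ∧
      ∀ A : Finset (Fin n), (A ∈ W → p.1 < ∑ i ∈ A, p.2 i) ∧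
        (A ∉ W → (∑ i ∈ A, p.2 i) < p.1)} =
      {p : ℝ × (Fin n → ℝ) | 0 < p.1} ∩ {p | p.1 < 1} ∩
      (⋂ i : Fin n, {p : ℝ × (Fin n → ℝ) | 0 < p.2 i}) ∩
      (⋂ i : Fin n, ⋂ j : Fin n, {p : ℝ × (Fin n → ℝ) | i < j → p.2 i < p.2 j}) ∩
      (⋂ A : Finset (Fin n), {p : ℝ × (Fin n → ℝ) | (A ∈ W → p.1 < ∑ i ∈ A, p.2 i) ∧
        (A ∉ W → (∑ i ∈ A, p.2 i) < p.1)}) := by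
    ext p
    simp only [Set.mem_setOf_eq, Set.mem_inter_iff, Set.mem_iInter]
    tauto
  rw [heq]
  refine (((((isOpen_lt continuous_const hc1).inter
      (isOpen_lt hc1 continuous_const)).inter
      (isOpen_iInter_of_finite fun i => isOpen_lt continuous_const (hci i))).inter
      (isOpen_iInter_of_finite fun i => isOpen_iInter_of_finite fun j => ?_)).inter
      (isOpen_iInter_of_finite fun A => ?_))
  · by_cases hij : i < j
    · simp only [hij, forall_true_left]
      exact isOpen_lt (hci i) (hci j)
    · have : {p : ℝ × (Fin n → ℝ) | i < j → p.2 i < p.2 j} = Set.univ := by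
        ext p; simp [hij]
      rw [this]; exact isOpen_univ
  · by_cases hA : A ∈ W
    · simp only [hA, not_true_eq_false, false_implies, and_true, forall_true_left]
      exact isOpen_lt hc1 (hcA A)
    · simp only [hA, not_false_eq_true, false_implies, true_and, forall_true_left]
      exact isOpen_lt (hcA A) hc1

/-- A simple game on `n` voters. -/
def IsSimpleGame (n : ℕ) (W : Set (Finset (Fin n))) : Prop :=
  Finset.univ ∈ W ∧ ∅ ∉ W ∧ ∀ S ∈ W, ∀ R : Finset (Fin n), S ⊆ R → R ∈ W

/-- The polytope of all normalized realizations `(q, w)` of the game `W`. -/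
def gamePolytope (n : ℕ) (W : Set (Finset (Fin n))) : Set (ℝ × (Fin n → ℝ)) :=
  {p | 0 < p.1 ∧ p.1 ≤ 1 ∧ (∀ i, 0 ≤ p.2 i) ∧ Monotone p.2 ∧ (∑ i, p.2 i) = 1 ∧
    ∀ A : Finset (Fin n), A ∈ W ↔ p.1 ≤ ∑ i ∈ A, p.2 i}

/-- If nonempty, the polytope of a simple game on `n` voters is `n`-dimensional:
its affine span in `ℝ^(n+1)` has dimension `n`. -/
theorem gamePolytope_dim
    (n : ℕ) (W : Set (Finset (Fin n))) (hSG : IsSimpleGame n W)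
    (hne : (gamePolytope n W).Nonempty) :
    Module.finrank ℝ (affineSpan ℝ (gamePolytope n W)).direction = n := by
  classical
  obtain ⟨p, hq0, hq1, hw0, hwmono, hwsum, hwin⟩ := hne
  set q : ℝ := p.1 with hqdef
  set w : Fin n → ℝ := p.2 with hwdef
  -- n ≠ 0
  rcases Nat.eq_zero_or_pos n with rfl | hn
  · exfalso; simpa using hwsum
  have hn0 : (n : ℝ) ≠ 0 := Nat.cast_ne_zero.mpr hn.ne'
  -- the strictly monotone reference vector u
  set c : ℝ := 2 / (n * (n + 1)) with hcdef
  have hc : 0 < c := by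
    apply div_pos (by norm_num)
    positivity
  set u : Fin n → ℝ := fun i => ((i : ℝ) + 1) * c with hudef
  have hu_pos : ∀ i, 0 < u i := fun i => by
    have : (0:ℝ) ≤ (i:ℝ) := Nat.cast_nonneg _
    simp only [hudef]; nlinarith
  have hu_mono : ∀ i j : Fin n, i < j → u i < u j := by
    intro i j hij
    have : (i : ℝ) < (j : ℝ) := by exact_mod_cast hij
    simp only [hudef]; nlinarith
  have hu_sum : ∑ i, u i = 1 := by
    simp only [hudef]
    rw [← Finset.sum_mul, sum_fin_add_one, hcdef]
    field_simp
  -- basic bounds on partial sums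
  have hwA_nonneg : ∀ A : Finset (Fin n), 0 ≤ ∑ i ∈ A, w i :=
    fun A => Finset.sum_nonneg fun i _ => hw0 i
  have hwA_le_one : ∀ A : Finset (Fin n), ∑ i ∈ A, w i ≤ 1 := by
    intro A
    rw [← hwsum]
    exact Finset.sum_le_sum_of_subset_of_nonneg (Finset.subset_univ A) fun i _ _ => hw0 i
  have huA_nonneg : ∀ A : Finset (Fin n), 0 ≤ ∑ i ∈ A, u i :=
    fun A => Finset.sum_nonneg fun i _ => (hu_pos i).le
  have huA_le_one : ∀ A : Finset (Fin n), ∑ i ∈ A, u i ≤ 1 := by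
    intro A
    rw [← hu_sum]
    exact Finset.sum_le_sum_of_subset_of_nonneg (Finset.subset_univ A) fun i _ _ => (hu_pos i).le
  -- the gap δ between q and losing coalition sums
  set Ls : Finset (Finset (Fin n)) := Finset.univ.filter (fun A => A ∉ W) with hLsdef
  have hempty : ∅ ∈ Ls := by
    simp only [hLsdef, Finset.mem_filter, Finset.mem_univ, true_and]
    exact hSG.2.1
  have hLsne : Ls.Nonempty := ⟨∅, hempty⟩
  set δ : ℝ := Ls.inf' hLsne (fun A => q - ∑ i ∈ A, w i) with hδdef
  have hlose : ∀ A : Finset (Fin n), A ∉ W → ∑ i ∈ A, w i < q := by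
    intro A hA
    by_contra h
    exact hA ((hwin A).mpr (not_lt.mp h))
  have hδ0 : 0 < δ := by
    rw [hδdef, Finset.lt_inf'_iff]
    intro A hA
    have hA' : A ∉ W := by
      simpa [hLsdef, Finset.mem_filter] using hA
    linarith [hlose A hA']
  have hδq : δ ≤ q := by
    have h := Finset.inf'_le (fun A => q - ∑ i ∈ A, w i) hempty
    simp only [Finset.sum_empty] at h
    linarith
  have hδA : ∀ A : Finset (Fin n), A ∉ W → ∑ i ∈ A, w i ≤ q - δ := by
    intro A hA
    have hA' : A ∈ Ls := by simp [hLsdef, hA]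
    have := Finset.inf'_le (fun A => q - ∑ i ∈ A, w i) hA'
    linarith
  -- the shifted point p*
  set θ : ℝ := min (δ / 4) (1 / 2) with hθdef
  have hθ0 : 0 < θ := lt_min (by linarith) (by norm_num)
  have hθ1 : θ ≤ 1 / 2 := min_le_right _ _
  have hθδ : θ ≤ δ / 4 := min_le_left _ _
  set qs : ℝ := q - δ / 2 with hqsdef
  set ws : Fin n → ℝ := fun i => (1 - θ) * w i + θ * u i with hwsdef
  set ps : ℝ × (Fin n → ℝ) := (qs, ws) with hpsdef
  have hws_sum : ∑ i, ws i = 1 := by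
    simp only [hwsdef]
    rw [Finset.sum_add_distrib, ← Finset.mul_sum, ← Finset.mul_sum, hwsum, hu_sum]
    ring
  have hwsA : ∀ A : Finset (Fin n),
      ∑ i ∈ A, ws i = (1 - θ) * (∑ i ∈ A, w i) + θ * (∑ i ∈ A, u i) := by
    intro A
    simp only [hwsdef]
    rw [Finset.sum_add_distrib, ← Finset.mul_sum, ← Finset.mul_sum]
  -- the strict set
  set S : Set (ℝ × (Fin n → ℝ)) := {p | 0 < p.1 ∧ p.1 < 1 ∧ (∀ i, 0 < p.2 i) ∧
      (∀ i j : Fin n, i < j → p.2 i < p.2 j) ∧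
      ∀ A : Finset (Fin n), (A ∈ W → p.1 < ∑ i ∈ A, p.2 i) ∧
        (A ∉ W → (∑ i ∈ A, p.2 i) < p.1)} with hSdef
  have hSopen : IsOpen S := strictSet_isOpen n W
  -- ps ∈ S
  have hpsS : ps ∈ S := by
    refine ⟨?_, ?_, ?_, ?_, ?_⟩
    · show 0 < qs
      rw [hqsdef]; linarith
    · show qs < 1
      rw [hqsdef]; linarith
    · intro i
      show 0 < ws i
      have h1 := hw0 i
      have h2 := hu_pos i
      show 0 < (1 - θ) * w i + θ * u i
      nlinarith
    · intro i j hij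
      show ws i < ws j
      have h1 : w i ≤ w j := hwmono hij.le
      have h2 : u i < u j := hu_mono i j hij
      show (1 - θ) * w i + θ * u i < (1 - θ) * w j + θ * u j
      nlinarith
    · intro A
      constructor
      · intro hA
        have hs : q ≤ ∑ i ∈ A, w i := (hwin A).mp hA
        have h1 := hwA_le_one A
        have h2 := huA_nonneg A
        show qs < ∑ i ∈ A, ws i
        rw [hwsA A, hqsdef]
        nlinarith
      · intro hA
        have hs : ∑ i ∈ A, w i ≤ q - δ := hδA A hA
        have h1 := hwA_nonneg A
        have h2 := huA_le_one A
        show (∑ i ∈ A, ws i) < qs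
        rw [hwsA A, hqsdef]
        nlinarith
  -- S members with sum 1 are in the polytope
  have hSP : ∀ y : ℝ × (Fin n → ℝ), y ∈ S → (∑ i, y.2 i) = 1 → y ∈ gamePolytope n W := by
    rintro y ⟨h1, h2, h3, h4, h5⟩ hsum
    refine ⟨h1, h2.le, fun i => (h3 i).le, ?_, hsum, ?_⟩
    · intro i j hij
      rcases eq_or_lt_of_le hij with h | h
      · rw [h]
      · exact (h4 i j h).le
    · intro A
      constructor
      · intro hA; exact ((h5 A).1 hA).le
      · intro hle
        by_contra hA
        exact absurd hle (not_le.mpr ((h5 A).2 hA))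
  have hpsP : ps ∈ gamePolytope n W := hSP ps hpsS hws_sum
  -- ball around ps inside S
  obtain ⟨ε, hε0, hball⟩ := Metric.isOpen_iff.mp hSopen ps hpsS
  -- direction = ker (sumLin n)
  have hle : (affineSpan ℝ (gamePolytope n W)).direction ≤ LinearMap.ker (sumLin n) := by
    have hsub : gamePolytope n W ⊆ (AffineSubspace.mk' ps (LinearMap.ker (sumLin n)) : Set _) := by
      intro x hx
      rw [SetLike.mem_coe, AffineSubspace.mem_mk', LinearMap.mem_ker]
      have hx5 : ∑ i, x.2 i = 1 := hx.2.2.2.2.1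
      have : sumLin n (x -ᵥ ps) = sumLin n x - sumLin n ps := by
        simp [vsub_eq_sub, map_sub]
      rw [this]
      have h1 : sumLin n x = 1 := hx5
      have h2 : sumLin n ps = 1 := by
        show ∑ i, ps.2 i = 1
        simpa [hpsdef] using hws_sum
      rw [h1, h2, sub_self]
    have := AffineSubspace.direction_le (affineSpan_le.mpr hsub)
    simpa [AffineSubspace.direction_mk'] using this
  have hge : LinearMap.ker (sumLin n) ≤ (affineSpan ℝ (gamePolytope n W)).direction := by
    intro d hd
    rcases eq_or_ne d 0 with rfl | hd0
    · exact Submodule.zero_mem _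
    have hdnorm : (0:ℝ) < ‖d‖ := norm_pos_iff.mpr hd0
    set t : ℝ := ε / (2 * ‖d‖) with htdef
    have ht0 : 0 < t := div_pos hε0 (by positivity)
    set y : ℝ × (Fin n → ℝ) := ps + t • d with hydef
    have hyball : y ∈ Metric.ball ps ε := by
      rw [Metric.mem_ball, dist_eq_norm]
      have h1 : y - ps = t • d := by simp [hydef]
      rw [h1, norm_smul, Real.norm_eq_abs, abs_of_pos ht0, htdef]
      rw [div_mul_eq_mul_div, div_lt_iff₀ (by positivity)]
      nlinarith
    have hyS : y ∈ S := hball hyball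
    have hdsum : ∑ i, d.2 i = 0 := hd
    have hysum : ∑ i, y.2 i = 1 := by
      have : y.2 = fun i => ps.2 i + t * d.2 i := by
        simp [hydef, Prod.add_def]
        rfl
      rw [this, Finset.sum_add_distrib, ← Finset.mul_sum, hdsum]
      have : ∑ i, ps.2 i = 1 := by simpa [hpsdef] using hws_sum
      rw [this]; ring
    have hyP : y ∈ gamePolytope n W := hSP y hyS hysum
    have hvd : y -ᵥ ps ∈ (affineSpan ℝ (gamePolytope n W)).direction :=
      AffineSubspace.vsub_mem_direction (subset_affineSpan ℝ _ hyP)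
        (subset_affineSpan ℝ _ hpsP)
    have hyvs : y -ᵥ ps = t • d := by simp [hydef, vsub_eq_sub]
    rw [hyvs] at hvd
    have : d = t⁻¹ • (t • d) := by
      rw [smul_smul, inv_mul_cancel₀ ht0.ne', one_smul]
    rw [this]
    exact Submodule.smul_mem _ _ hvd
  have hdir : (affineSpan ℝ (gamePolytope n W)).direction = LinearMap.ker (sumLin n) :=
    le_antisymm hle hge
  rw [hdir]
  exact finrank_ker_sumLin n hn
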